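/- Let a < b be real numbers, D > 0, and U : ℝ → ℝ twice continuously differentiable on [a, b], and set f = −U'. Suppose v : ℝ → ℝ is twice continuously differentiable on [a, b], satisfies v(a) = v(b) = 0, v(x) ≥ 0 for all x ∈ [a, b], ∫ₐᵇ v(x) dx > 0, and γ v(x) = (D v'(x) − f(x) v(x))' for all x ∈ [a, b]. Then γ < 0 (strictly). -/

import Mathlib

/-- For a potential drift `f = −U'`, a nonnegative Dirichlet eigenfunction of
the Fokker-Planck operator on `[a, b]` with positive total mass has strictly
negative eigenvalue `γ < 0`. -/
theorem fokker_planck_leading_eigenvalue_neg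
    (a b D γ : ℝ) (hab : a < b) (hD : 0 < D)
    (U f v : ℝ → ℝ)
    (hU : ContDiffOn ℝ 2 U (Set.Icc a b))
    (hf : ∀ x, f x = -deriv U x)
    (hv : ContDiffOn ℝ 2 v (Set.Icc a b))
    (hva : v a = 0) (hvb : v b = 0)
    (hpos : ∀ x ∈ Set.Icc a b, 0 ≤ v x)
    (hmass : 0 < ∫ x in a..b, v x)
    (heig : ∀ x ∈ Set.Icc a b,
      γ * v x = deriv (fun y => D * deriv v y - f y * v y) x) :
    γ < 0 := by
  set s := Set.Icc a b with hs_def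
  have hsu : UniqueDiffOn ℝ s := uniqueDiffOn_Icc hab
  set g := derivWithin v s with hg_def
  set h := derivWithin U s with hh_def
  have hg1 : ContDiffOn ℝ 1 g s := hv.derivWithin hsu (by norm_num)
  have hh1 : ContDiffOn ℝ 1 h s := hU.derivWithin hsu (by norm_num)
  have hvc : ContinuousOn v s := hv.continuousOn
  have hgc : ContinuousOn g s := hg1.continuousOn
  have hhc : ContinuousOn h s := hh1.continuousOn
  have hvd : DifferentiableOn ℝ v s := hv.differentiableOn (by norm_num)
  set W : ℝ → ℝ := fun y => D * g y + h y * v y with hW_def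
  have hWc : ContinuousOn W s := (continuousOn_const.mul hgc).add (hhc.mul hvc)
  have hWd : ∀ x ∈ Set.Ioo a b, HasDerivAt W (γ * v x) x := by
    intro x hx
    have hxs : x ∈ s := Set.Ioo_subset_Icc_self hx
    have hsn : s ∈ nhds x := Icc_mem_nhds hx.1 hx.2
    have hIoo : Set.Ioo a b ∈ nhds x := Ioo_mem_nhds hx.1 hx.2
    have heq : W =ᶠ[nhds x] (fun y => D * deriv v y - f y * v y) := by
      filter_upwards [hIoo] with y hy
      have hys : s ∈ nhds y := Icc_mem_nhds hy.1 hy.2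
      have h1 : g y = deriv v y := derivWithin_of_mem_nhds hys
      have h2 : h y = deriv U y := derivWithin_of_mem_nhds hys
      simp only [hW_def]
      rw [h1, h2, hf y]; ring
    have hgx : DifferentiableAt ℝ g x :=
      ((hg1.differentiableOn (by norm_num)) x hxs).differentiableAt hsn
    have hhx : DifferentiableAt ℝ h x :=
      ((hh1.differentiableOn (by norm_num)) x hxs).differentiableAt hsn
    have hvx : DifferentiableAt ℝ v x := (hvd x hxs).differentiableAt hsn
    have hWx : DifferentiableAt ℝ W x := (hgx.const_mul D).add (hhx.mul hvx)
    have hdW : deriv W x = γ * v x := by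
      rw [heq.deriv_eq, ← heig x hxs]
    have := hWx.hasDerivAt
    rwa [hdW] at this
  have hInt : IntervalIntegrable (fun x => γ * v x) MeasureTheory.volume a b := by
    apply ContinuousOn.intervalIntegrable
    rw [Set.uIcc_of_le hab.le]
    exact continuousOn_const.mul hvc
  have hFTC : ∫ x in a..b, γ * v x = W b - W a :=
    intervalIntegral.integral_eq_sub_of_hasDeriv_right_of_le hab.le hWc
      (fun x hx => ((hWd x hx).hasDerivWithinAt)) hInt
  have hWa : W a = D * g a := by simp [hW_def, hva]
  have hWb : W b = D * g b := by simp [hW_def, hvb]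
  have hkey : γ * ∫ x in a..b, v x = D * g b - D * g a := by
    rw [← intervalIntegral.integral_const_mul, hFTC, hWa, hWb]
  -- Ioo is dense at both endpoints
  have hclA : a ∈ closure (Set.Ioo a b) := by
    rw [closure_Ioo hab.ne]; exact Set.left_mem_Icc.mpr hab.le
  have hclB : b ∈ closure (Set.Ioo a b) := by
    rw [closure_Ioo hab.ne]; exact Set.right_mem_Icc.mpr hab.le
  -- sign of the one-sided derivative at `a`
  have hga : 0 ≤ g a := by
    have hmem : a ∈ s := Set.left_mem_Icc.mpr hab.le
    have hd : HasDerivWithinAt v (g a) s a := (hvd a hmem).hasDerivWithinAt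
    have hslope := hasDerivWithinAt_iff_tendsto_slope.mp hd
    have hsub : Set.Ioo a b ⊆ s \ {a} := fun y hy =>
      ⟨Set.Ioo_subset_Icc_self hy, by simp [hy.1.ne']⟩
    haveI : (nhdsWithin a (Set.Ioo a b)).NeBot :=
      mem_closure_iff_nhdsWithin_neBot.mp hclA
    haveI : (nhdsWithin a (s \ {a})).NeBot :=
      Filter.neBot_of_le (nhdsWithin_mono a hsub)
    refine ge_of_tendsto hslope ?_
    filter_upwards [self_mem_nhdsWithin] with y hy
    rw [slope_def_field, hva, sub_zero]
    exact div_nonneg (hpos y hy.1) (sub_nonneg.mpr hy.1.1)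
  -- sign of the one-sided derivative at `b`
  have hgb : g b ≤ 0 := by
    have hmem : b ∈ s := Set.right_mem_Icc.mpr hab.le
    have hd : HasDerivWithinAt v (g b) s b := (hvd b hmem).hasDerivWithinAt
    have hslope := hasDerivWithinAt_iff_tendsto_slope.mp hd
    have hsub : Set.Ioo a b ⊆ s \ {b} := fun y hy =>
      ⟨Set.Ioo_subset_Icc_self hy, by simp [hy.2.ne]⟩
    haveI : (nhdsWithin b (Set.Ioo a b)).NeBot :=
      mem_closure_iff_nhdsWithin_neBot.mp hclB
    haveI : (nhdsWithin b (s \ {b})).NeBot :=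
      Filter.neBot_of_le (nhdsWithin_mono b hsub)
    refine le_of_tendsto hslope ?_
    filter_upwards [self_mem_nhdsWithin] with y hy
    rw [slope_def_field, hvb, sub_zero]
    have hyb : y < b := lt_of_le_of_ne hy.1.2 (by simpa using hy.2)
    exact div_nonpos_iff.mpr (Or.inl ⟨hpos y hy.1, by linarith⟩)
  -- first conclusion : γ ≤ 0
  have hle : γ ≤ 0 := by
    by_contra hc
    push_neg at hc
    nlinarith [mul_pos hc hmass, mul_nonneg hD.le hga, mul_nonpos_of_nonneg_of_nonpos hD.le hgb]
  -- now rule out γ = 0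
  rcases lt_or_eq_of_le hle with hlt | hγ
  · exact hlt
  exfalso
  -- with γ = 0, both one-sided derivatives vanish
  have hgab : D * g b - D * g a = 0 := by rw [← hkey, hγ, zero_mul]
  have hga0 : g a = 0 := by nlinarith
  have hgb0 : g b = 0 := by nlinarith
  -- W is constant (equal to 0) on [a, b]
  have hW0 : ∀ x ∈ s, W x = 0 := by
    intro x hx
    rcases eq_or_lt_of_le hx.1 with rfl | hax
    · rw [hWa, hga0, mul_zero]
    rcases eq_or_lt_of_le hx.2 with rfl | hxb
    · rw [hWb, hgb0, mul_zero]
    have hxIoo : x ∈ Set.Ioo a b := ⟨hax, hxb⟩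
    have hconst := constant_of_has_deriv_right_zero
      (f := W) (a := x) (b := b)
      (hWc.mono (Set.Icc_subset_Icc hx.1 le_rfl))
      (by
        intro t ht
        have htIoo : t ∈ Set.Ioo a b := ⟨lt_of_lt_of_le hax ht.1, ht.2⟩
        have := hWd t htIoo
        rw [hγ, zero_mul] at this
        exact this.hasDerivWithinAt)
    have hb' := hconst b (Set.right_mem_Icc.mpr hxb.le)
    -- hb' : W b = W x
    rw [hWb, hgb0, mul_zero] at hb'
    exact hb'.symm
  -- hence v satisfies the linear ODE v' = -(h/D) v with v a = 0 : Grönwall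
  obtain ⟨C, hC⟩ := isCompact_Icc.exists_bound_of_continuousOn hhc
  have hC0 : 0 ≤ C := le_trans (norm_nonneg _) (hC a (Set.left_mem_Icc.mpr hab.le))
  have hbound : ∀ x ∈ Set.Ico a b, ‖g x‖ ≤ (C / D) * ‖v x‖ + 0 := by
    intro x hx
    have hxs : x ∈ s := Set.Ico_subset_Icc_self hx
    have h0 := hW0 x hxs
    have hgx : g x = -(h x * v x) / D := by
      field_simp
      simp only [hW_def] at h0
      linarith
    have hDn : ‖D‖ = D := by rw [Real.norm_eq_abs, abs_of_pos hD]
    rw [hgx, norm_div, norm_neg, norm_mul, add_zero, hDn, div_mul_eq_mul_div]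
    gcongr
    exact hC x hxs
  have hder : ∀ x ∈ Set.Ico a b, HasDerivWithinAt v (g x) (Set.Ici x) x := by
    intro x hx
    have hxs : x ∈ s := Set.Ico_subset_Icc_self hx
    have hd : HasDerivWithinAt v (g x) s x := (hvd x hxs).hasDerivWithinAt
    refine hd.mono_of_mem_nhdsWithin ?_
    refine mem_nhdsWithin.mpr ⟨Set.Iio b, isOpen_Iio, hx.2, ?_⟩
    rintro y ⟨hy1, hy2⟩
    exact ⟨le_trans hx.1 hy2, le_of_lt hy1⟩
  have hvz : ∀ x ∈ s, v x = 0 := by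
    intro x hx
    have := norm_le_gronwallBound_of_norm_deriv_right_le (δ := 0) hvc hder
      (by simp [hva]) hbound x hx
    rw [gronwallBound_ε0, zero_mul] at this
    have h2 : ‖v x‖ = 0 := le_antisymm this (norm_nonneg (v x))
    simpa using h2
  have : (∫ x in a..b, v x) = 0 := by
    rw [intervalIntegral.integral_congr (g := fun _ => (0 : ℝ))
      (by intro y hy; rw [Set.uIcc_of_le hab.le] at hy; exact hvz y hy)]
    simp
  linarith
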